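/- Let P be a nonzero real polynomial of degree n ≥ 1, let m ∈ ℝ, ε > 0, and let λ ≥ 1 be an integer. Let M be the set of points m_j := m + j·ε·2^{−λ} for integers j with |j| ≤ ⌈n·2^λ/2⌉, and let m̄ := m + i·ε for some integer i with |i| ≤ ⌈n/2⌉. Then the number of points m_j ∈ M with |P(m_j)| < (1 + (n+1)·2^λ)^{−n} · |P(m̄)| is at most 2n. In particular, since M contains at least n·2^λ + 1 points, at most a fraction 2n/(n·2^λ + 1) of the points of M fail the bound |P(m_j)| ≥ (1 + (n+1)·2^λ)^{−n} · |P(m̄)|. -/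

import Mathlib

open Polynomial


lemma abs_eval_eq (P : Polynomial ℝ) (x : ℝ) :
    |P.eval x| = ‖(P.map (algebraMap ℝ ℂ)).eval (x : ℂ)‖ := by
  rw [eval_map, show ((x:ℂ)) = algebraMap ℝ ℂ x from rfl, eval₂_at_apply]
  simp

lemma key_bound (P : Polynomial ℝ) (hP : P ≠ 0) (n : ℕ) (hdeg : P.natDegree = n)
    (a b δ K : ℝ) (hδ : 0 < δ) (hK : 0 ≤ K) (hab : |a - b| ≤ K * δ)
    (hroot : ∀ z ∈ (P.map (algebraMap ℝ ℂ)).roots, δ ≤ ‖(b : ℂ) - z‖) :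
    |P.eval a| ≤ (1 + K) ^ n * |P.eval b| := by
  set Q := P.map (algebraMap ℝ ℂ) with hQ
  have hQ0 : Q ≠ 0 := by
    simpa [hQ, Polynomial.map_eq_zero] using hP
  have hsplits : Splits Q := IsAlgClosed.splits _
  have hcard : Q.roots.card = n := by
    rw [(splits_iff_card_roots).1 hsplits, hQ, natDegree_map, hdeg]
  have hfact := hsplits.eq_prod_roots
  have heval : ∀ x : ℂ, ‖Q.eval x‖
      = ‖Q.leadingCoeff‖ * (Q.roots.map (fun z => ‖x - z‖)).prod := by
    intro x
    conv_lhs => rw [hfact]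
    rw [eval_mul, eval_C, eval_multiset_prod, norm_mul]
    congr 1
    rw [show ∀ s : Multiset ℂ, ‖s.prod‖ = (s.map norm).prod from
      fun s => map_multiset_prod (normHom : ℂ →*₀ ℝ) s, Multiset.map_map, Multiset.map_map]
    congr 1
    ext z
    simp
  have habz : ∀ z ∈ Q.roots, ‖(a : ℂ) - z‖ ≤ (1 + K) * ‖(b : ℂ) - z‖ := by
    intro z hz
    have h1 : ‖(a : ℂ) - z‖ ≤ ‖(a : ℂ) - b‖ + ‖(b : ℂ) - z‖ := by
      calc ‖(a : ℂ) - z‖ = ‖((a : ℂ) - b) + ((b : ℂ) - z)‖ := by ring_nf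
        _ ≤ _ := norm_add_le _ _
    have h2 : ‖(a : ℂ) - b‖ ≤ K * δ := by
      rw [← Complex.ofReal_sub, Complex.norm_real, Real.norm_eq_abs]; exact hab
    have h3 : K * δ ≤ K * ‖(b : ℂ) - z‖ :=
      mul_le_mul_of_nonneg_left (hroot z hz) hK
    nlinarith [hroot z hz, norm_nonneg ((b:ℂ) - z)]
  rw [abs_eval_eq, abs_eval_eq, heval, heval]
  rw [mul_left_comm]
  apply mul_le_mul_of_nonneg_left _ (norm_nonneg _)
  calc (Q.roots.map (fun z => ‖(a:ℂ) - z‖)).prod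
      ≤ (Q.roots.map (fun z => (1 + K) * ‖(b:ℂ) - z‖)).prod :=
        Multiset.prod_map_le_prod_map₀ _ _ (fun z _ => norm_nonneg _) habz
    _ = (1 + K) ^ n * (Q.roots.map (fun z => ‖(b:ℂ) - z‖)).prod := by
        rw [show (fun z => (1 + K) * ‖(b:ℂ) - z‖)
            = (fun z => (fun _ => (1+K)) z * (fun z => ‖(b:ℂ) - z‖) z) from rfl,
          Multiset.prod_map_mul, Multiset.map_const', Multiset.prod_replicate, hcard]

/-- Deterministic core of the pseudo-admissible point lemma: at most `2n` of the points
`m_j = m + j·ε·2^{-λ}` (`|j| ≤ ⌈n·2^λ/2⌉`) of the refined multipoint satisfy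
`|P(m_j)| < (1 + (n+1)·2^λ)^{-n} · |P(m̄)|`, where `m̄ = m + i·ε` is any point of the coarse
multipoint (`|i| ≤ ⌈n/2⌉`). -/
theorem card_bad_pseudo_admissible_points_le
    (P : Polynomial ℝ) (hP : P ≠ 0) (n : ℕ) (hdeg : P.natDegree = n) (hn : 1 ≤ n)
    (m ε : ℝ) (hε : 0 < ε) (l : ℕ) (hl : 1 ≤ l)
    (i : ℤ) (hi : |i| ≤ ⌈(n : ℚ) / 2⌉) :
    {j : ℤ | |j| ≤ ⌈((n * 2 ^ l : ℕ) : ℚ) / 2⌉ ∧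
        |P.eval (m + j * (ε * ((2 : ℝ) ^ l)⁻¹))| <
          ((1 + (n + 1) * 2 ^ l : ℝ) ^ n)⁻¹ * |P.eval (m + i * ε)|}.ncard ≤ 2 * n := by
  have h2l : (0:ℝ) < 2 ^ l := by positivity
  set δ : ℝ := ε * ((2:ℝ) ^ l)⁻¹ with hδdef
  have hδ : 0 < δ := by positivity
  set K : ℝ := ((n:ℝ) + 1) * 2 ^ l with hKdef
  have hK : (0:ℝ) ≤ K := by positivity
  have hC : (0:ℝ) < (1 + K) ^ n := by positivity
  set a : ℝ := m + i * ε with ha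
  set Q := P.map (algebraMap ℝ ℂ) with hQ
  -- bound on |i|
  have hi2 : 2 * |i| ≤ (n:ℤ) + 1 := by
    have h1 : (|i| : ℚ) ≤ (⌈(n:ℚ)/2⌉ : ℚ) := by exact_mod_cast hi
    have h2 : (⌈(n:ℚ)/2⌉ : ℚ) < (n:ℚ)/2 + 1 := Int.ceil_lt_add_one _
    have h3 : ((2 * |i| : ℤ) : ℚ) < ((n:ℤ) + 2 : ℤ) := by push_cast at h1 h2 ⊢; linarith
    have h4 : (2 * |i| : ℤ) < (n:ℤ) + 2 := by exact_mod_cast h3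
    omega
  have hi' : (|i| : ℝ) ≤ ((n:ℝ) + 1) / 2 := by
    have : ((2 * |i| : ℤ) : ℝ) ≤ (((n:ℤ) + 1 : ℤ) : ℝ) := by exact_mod_cast hi2
    push_cast at this; linarith
  -- closeness bound
  have hab : ∀ j : ℤ, |j| ≤ ⌈((n * 2 ^ l : ℕ) : ℚ) / 2⌉ → |a - (m + j * δ)| ≤ K * δ := by
    intro j hj
    have hj2 : 2 * |j| ≤ ((n * 2 ^ l : ℕ) : ℤ) + 1 := by
      have h1 : (|j| : ℚ) ≤ (⌈((n * 2 ^ l : ℕ) : ℚ)/2⌉ : ℚ) := by exact_mod_cast hj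
      have h2 : (⌈((n * 2 ^ l : ℕ) : ℚ)/2⌉ : ℚ) < ((n * 2 ^ l : ℕ) : ℚ)/2 + 1 :=
        Int.ceil_lt_add_one _
      have h3 : ((2 * |j| : ℤ) : ℚ) < (((n * 2 ^ l : ℕ) : ℤ) + 2 : ℤ) := by
        push_cast at h1 h2 ⊢; linarith
      have h4 : (2 * |j| : ℤ) < ((n * 2 ^ l : ℕ) : ℤ) + 2 := by exact_mod_cast h3
      omega
    have hj' : (|j| : ℝ) ≤ ((n:ℝ) * 2 ^ l + 1) / 2 := by
      have : ((2 * |j| : ℤ) : ℝ) ≤ ((((n * 2 ^ l : ℕ) : ℤ) + 1 : ℤ) : ℝ) := by exact_mod_cast hj2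
      push_cast at this; linarith
    have habs : |a - (m + j * δ)| ≤ |(i:ℝ)| * ε + |(j:ℝ)| * δ := by
      have : a - (m + j * δ) = i * ε - j * δ := by rw [ha]; ring
      rw [this]
      calc |i * ε - j * δ| ≤ |(i:ℝ) * ε| + |(j:ℝ) * δ| := abs_sub _ _
        _ = |(i:ℝ)| * ε + |(j:ℝ)| * δ := by
            rw [abs_mul, abs_mul, abs_of_pos hε, abs_of_pos hδ]
    have hKδ : K * δ = ((n:ℝ) + 1) * ε := by
      rw [hKdef, hδdef]
      field_simp
    rw [hKδ]
    have h2l' : (2:ℝ) ≤ 2 ^ l := by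
      calc (2:ℝ) = 2 ^ 1 := (pow_one 2).symm
        _ ≤ 2 ^ l := pow_le_pow_right₀ (by norm_num) hl
    have hjd : (|j| : ℝ) * δ ≤ ((n:ℝ) + 1) / 2 * ε := by
      rw [hδdef]
      have h1 : (|j| : ℝ) * (ε * ((2:ℝ) ^ l)⁻¹) ≤ ((n:ℝ) * 2 ^ l + 1) / 2 * (ε * ((2:ℝ) ^ l)⁻¹) := by
        apply mul_le_mul_of_nonneg_right hj'
        positivity
      refine h1.trans ?_
      rw [div_mul_eq_mul_div, div_mul_eq_mul_div, div_le_div_iff₀ (by norm_num) (by norm_num)]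
      have hinv : ((2:ℝ) ^ l)⁻¹ * (2:ℝ) ^ l = 1 := inv_mul_cancel₀ (ne_of_gt h2l)
      nlinarith [hε.le, h2l, hn]
    have := habs.trans (by nlinarith [hi', hε.le] : |(i:ℝ)| * ε + |(j:ℝ)| * δ ≤ ((n:ℝ) + 1) * ε)
    exact this
  -- the covering finset
  set c : ℂ → ℝ := fun z => (z.re - m) / δ with hc
  set B : Finset ℤ := Q.roots.toFinset.biUnion (fun z => {⌈c z⌉ - 1, ⌈c z⌉}) with hB
  have hsub : {j : ℤ | |j| ≤ ⌈((n * 2 ^ l : ℕ) : ℚ) / 2⌉ ∧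
      |P.eval (m + j * (ε * ((2 : ℝ) ^ l)⁻¹))| <
        ((1 + (n + 1) * 2 ^ l : ℝ) ^ n)⁻¹ * |P.eval (m + i * ε)|} ⊆ ↑B := by
    rintro j ⟨hj1, hj2⟩
    have hj2' : |P.eval (m + j * δ)| < ((1 + K) ^ n)⁻¹ * |P.eval a| := hj2
    -- there must be a close root
    have hclose : ∃ z ∈ Q.roots, ‖((m + j * δ : ℝ) : ℂ) - z‖ < δ := by
      by_contra hno
      push_neg at hno
      have hbound := key_bound P hP n hdeg a (m + j * δ) δ K hδ hK (hab j hj1) hno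
      have : |P.eval a| < |P.eval a| := by
        calc |P.eval a| ≤ (1 + K) ^ n * |P.eval (m + j * δ)| := hbound
          _ < (1 + K) ^ n * (((1 + K) ^ n)⁻¹ * |P.eval a|) := by
              exact mul_lt_mul_of_pos_left hj2' hC
          _ = |P.eval a| := by field_simp
      exact lt_irrefl _ this
    obtain ⟨z, hz, hzlt⟩ := hclose
    have hre : |(m + j * δ) - z.re| < δ := by
      have h1 : |(((m + j * δ : ℝ) : ℂ) - z).re| ≤ ‖((m + j * δ : ℝ) : ℂ) - z‖ :=
        Complex.abs_re_le_norm _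
      have h2 : (((m + j * δ : ℝ) : ℂ) - z).re = (m + j * δ) - z.re := by simp
      rw [h2] at h1
      exact h1.trans_lt hzlt
    have habslt := abs_lt.mp hre
    have hc1 : c z < (j:ℝ) + 1 := by
      rw [hc]; dsimp only; rw [div_lt_iff₀ hδ]; nlinarith [habslt.1]
    have hc2 : (j:ℝ) - 1 < c z := by
      rw [hc]; dsimp only; rw [lt_div_iff₀ hδ]; nlinarith [habslt.2]
    have hle1 : j ≤ ⌈c z⌉ := by
      have := Int.lt_ceil.mpr (show ((j - 1 : ℤ) : ℝ) < c z by push_cast; linarith)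
      omega
    have hle2 : ⌈c z⌉ ≤ j + 1 := by
      exact Int.ceil_le.mpr (show c z ≤ ((j + 1 : ℤ) : ℝ) by push_cast; linarith)
    rw [hB]
    simp only [Finset.coe_biUnion, Set.mem_iUnion, Finset.mem_coe, Finset.mem_insert,
      Finset.mem_singleton, Multiset.mem_toFinset]
    exact ⟨z, hz, by omega⟩
  have hQ0 : Q ≠ 0 := by simpa [hQ, Polynomial.map_eq_zero] using hP
  calc _ ≤ (B : Set ℤ).ncard := Set.ncard_le_ncard hsub B.finite_toSet
    _ = B.card := Set.ncard_coe_finset B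
    _ ≤ ∑ z ∈ Q.roots.toFinset, ({⌈c z⌉ - 1, ⌈c z⌉} : Finset ℤ).card :=
        Finset.card_biUnion_le
    _ ≤ ∑ _z ∈ Q.roots.toFinset, 2 := by
        apply Finset.sum_le_sum
        intro z _
        exact (Finset.card_insert_le _ _).trans (by simp)
    _ = 2 * Q.roots.toFinset.card := by rw [Finset.sum_const, smul_eq_mul, mul_comm]
    _ ≤ 2 * Multiset.card Q.roots := by
        exact Nat.mul_le_mul_left 2 (Multiset.toFinset_card_le _)
    _ ≤ 2 * n := by
        apply Nat.mul_le_mul_left 2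
        calc Multiset.card Q.roots ≤ Q.natDegree := Polynomial.card_roots' Q
          _ = n := by rw [hQ, natDegree_map, hdeg]
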